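/- Let q be a prime power with q ≡ 2 (mod 3) and let ω ∈ F_{q^2} have multiplicative order 3. Then the map η : F_{q^2} → F_q × F_q defined by η(x) = (ω^q x + (ω^q x)^q, ω x + (ω x)^q) is an F_q-vector space isomorphism. -/

import Mathlib

/-- Statement 18: for `q ≡ 2 (mod 3)` and `ω` of order `3`, the map
`η(x) = (ω^q x + (ω^q x)^q, ω x + (ω x)^q)` is an `F_q`-vector space
isomorphism from `F_{q^2}` onto `F_q × F_q`: it is injective, its range is
exactly `F_q × F_q`, and it is additive and `F_q`-homogeneous. -/
theorem stmt18 (q : ℕ) (hq : ∃ p k : ℕ, p.Prime ∧ 0 < k ∧ q = p ^ k)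
    (hq3 : q % 3 = 2)
    (F : Type*) [Field F] [Fintype F] (hF : Fintype.card F = q ^ 2)
    (ω : F) (hω : orderOf ω = 3) :
    Function.Injective
        (fun x : F => (ω ^ q * x + (ω ^ q * x) ^ q, ω * x + (ω * x) ^ q)) ∧
      Set.range (fun x : F =>
          (ω ^ q * x + (ω ^ q * x) ^ q, ω * x + (ω * x) ^ q)) =
        {a : F × F | a.1 ^ q = a.1 ∧ a.2 ^ q = a.2} ∧
      (∀ x y : F,
        (ω ^ q * (x + y) + (ω ^ q * (x + y)) ^ q,
            ω * (x + y) + (ω * (x + y)) ^ q) =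
          (ω ^ q * x + (ω ^ q * x) ^ q, ω * x + (ω * x) ^ q) +
            (ω ^ q * y + (ω ^ q * y) ^ q, ω * y + (ω * y) ^ q)) ∧
      (∀ c x : F, c ^ q = c →
        (ω ^ q * (c * x) + (ω ^ q * (c * x)) ^ q,
            ω * (c * x) + (ω * (c * x)) ^ q) =
          (c * (ω ^ q * x + (ω ^ q * x) ^ q),
            c * (ω * x + (ω * x) ^ q))) := by
  -- basic facts about ω
  have hω3 : ω ^ 3 = 1 := by rw [← hω]; exact pow_orderOf_eq_one ω
  have hω0 : ω ≠ 0 := by intro h; rw [h] at hω3; simp at hω3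
  have hω1 : ω ≠ 1 := by intro h; rw [h, orderOf_one] at hω; omega
  have hne' : ω - ω ^ 2 ≠ 0 := by
    rw [sub_ne_zero]
    intro h
    have : ω * 1 = ω * ω := by rw [mul_one]; rw [sq] at h; exact h
    exact hω1 ((mul_left_cancel₀ hω0 this).symm)
  have hne'' : ω ^ 2 - ω ≠ 0 := fun h => hne' (by linear_combination -h)
  have hωq : ω ^ q = ω ^ 2 := by
    have hqe : q = 3 * (q / 3) + 2 := by omega
    rw [hqe, pow_add, pow_mul, hω3, one_pow, one_mul]
  -- characteristic facts
  obtain ⟨p, k, hp, hk, hqpk⟩ := hq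
  obtain ⟨p', hp'⟩ := CharP.exists F
  haveI := hp'
  have hp'p : p'.Prime := CharP.char_is_prime F p'
  haveI : Fact p'.Prime := ⟨hp'p⟩
  obtain ⟨n, hn⟩ := FiniteField.card F p'
  have hdvd : p' ∣ p ^ k := by
    have h1 : p' ∣ (p ^ k) ^ 2 := by
      rw [← hqpk, ← hF, hn.2]; exact dvd_pow_self p' n.pos.ne'
    exact hp'p.dvd_of_dvd_pow (by simpa [pow_mul] using h1)
  have hpp' : p' = p := (Nat.prime_dvd_prime_iff_eq hp'p hp).1 (hp'p.dvd_of_dvd_pow hdvd)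
  haveI hFp : CharP F p := hpp' ▸ hp'
  haveI : Fact p.Prime := ⟨hp⟩
  have frob_add : ∀ x y : F, (x + y) ^ q = x ^ q + y ^ q := fun x y => by
    rw [hqpk]; exact add_pow_char_pow x y p k
  have frob_sub : ∀ x y : F, (x - y) ^ q = x ^ q - y ^ q := fun x y => by
    rw [hqpk]; exact sub_pow_char_pow x y k
  have hqq : ∀ x : F, (x ^ q) ^ q = x := fun x => by
    rw [← pow_mul, ← sq, ← hF]; exact FiniteField.pow_card x
  have hω2q : (ω ^ 2) ^ q = ω := by rw [← hωq]; exact hqq ω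
  refine ⟨?_, ?_, ?_, ?_⟩
  · -- injectivity
    intro x x' h
    simp only [Prod.mk.injEq] at h
    obtain ⟨h1, h2⟩ := h
    rw [mul_pow, mul_pow, hqq ω, hωq] at h1
    rw [mul_pow, mul_pow, hωq] at h2
    have h3 : (ω - ω ^ 2) * x = (ω - ω ^ 2) * x' := by
      linear_combination ω ^ 2 * h1 - ω * h2 - ω * (x - x') * hω3
    exact mul_left_cancel₀ hne' h3
  · -- range
    ext a
    simp only [Set.mem_range, Set.mem_setOf_eq]
    constructor
    · rintro ⟨x, rfl⟩
      constructor
      · show (ω ^ q * x + (ω ^ q * x) ^ q) ^ q = _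
        rw [frob_add, hqq (ω ^ q * x)]; ring
      · show (ω * x + (ω * x) ^ q) ^ q = _
        rw [frob_add, hqq (ω * x)]; ring
    · rintro ⟨ha, hb⟩
      obtain ⟨a, b⟩ := a
      simp only at ha hb ⊢
      refine ⟨(ω ^ 2 * a - ω * b) / (ω - ω ^ 2), ?_⟩
      have hxq : ((ω ^ 2 * a - ω * b) / (ω - ω ^ 2)) ^ q
          = (ω * a - ω ^ 2 * b) / (ω ^ 2 - ω) := by
        rw [div_pow, frob_sub, frob_sub, mul_pow, mul_pow, hω2q, hωq, ha, hb]
      rw [Prod.mk.injEq]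
      constructor
      · rw [mul_pow, hqq ω, hωq, hxq]
        field_simp
        ring_nf
        linear_combination (a * (ω - 1)) * hω3
      · rw [mul_pow, hωq, hxq]
        field_simp
        ring_nf
        linear_combination (b * (ω - 1)) * hω3
  · -- additivity
    intro x y
    rw [Prod.mk_add_mk, Prod.mk.injEq]
    constructor
    · rw [mul_add, frob_add]; ring
    · rw [mul_add, frob_add]; ring
  · -- homogeneity
    intro c x hc
    have key : ∀ γ : F, γ * (c * x) + (γ * (c * x)) ^ q
        = c * (γ * x + (γ * x) ^ q) := fun γ => by
      rw [show γ * (c * x) = c * (γ * x) by ring, mul_pow, hc]; ring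
    rw [Prod.mk.injEq]
    exact ⟨key _, key _⟩
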